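/- Let T be a tree with root at infinity of bounded degree, i.e., sup_{x∈T} #succ(x) < ∞, and let m be a flow measure on T. Then there exists a sequence (m_j) of uniformly rational flow measures on T such that m_j(x) → m(x) as j → ∞ for every x ∈ T. -/

import Mathlib

open scoped ENNReal NNReal
open MeasureTheory Filter

namespace Flow

/-- A tree with root at infinity: a set with a predecessor map, no cycles,
joint ancestors, and finitely many successors at each vertex. -/
structure RootedTree (T : Type*) where
  pred : T → T
  no_cycle : ∀ (x : T) (k : ℕ), 1 ≤ k → pred^[k] x ≠ x
  connected : ∀ x y : T, ∃ k l : ℕ, pred^[k] x = pred^[l] y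
  succ_finite : ∀ x : T, {y : T | pred y = x}.Finite

variable {T T₁ T₂ : Type*}

/-- The graph distance on a tree with root at infinity. -/
noncomputable def RootedTree.dist (t : RootedTree T) (x y : T) : ℕ :=
  sInf {n : ℕ | ∃ k l : ℕ, k + l = n ∧ t.pred^[k] x = t.pred^[l] y}

/-- The partial order: `x ≤ y` iff `y` is an ancestor of `x`. -/
def RootedTree.le (t : RootedTree T) (x y : T) : Prop :=
  ∃ k : ℕ, t.pred^[k] x = y

def RootedTree.lt (t : RootedTree T) (x y : T) : Prop :=
  t.le x y ∧ x ≠ y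

/-- A flow measure on a tree with root at infinity. -/
structure IsFlowMeasure (t : RootedTree T) (m : T → ℝ) : Prop where
  pos : ∀ x, 0 < m x
  flow : ∀ x, m x = ∑' y : {y : T // t.pred y = x}, m (y : T)

/-- A level function on a tree with root at infinity. -/
def IsLevel (t : RootedTree T) (lev : T → ℤ) : Prop :=
  ∀ x : T, lev (t.pred x) = lev x + 1

/-- A homogeneous tree where every vertex has exactly `q` successors. -/
def IsHomogeneous (t : RootedTree T) (q : ℕ) : Prop :=
  ∀ x : T, {y : T | t.pred y = x}.ncard = q

/-- The canonical flow measure `q ^ ℓ(x)` on the homogeneous tree of index `q`. -/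
noncomputable def canonicalFlow (q : ℕ) (lev : T → ℤ) : T → ℝ :=
  fun x => (q : ℝ) ^ (lev x)

/-- A `q`-uniformly rational flow measure. -/
def UniformlyRational (t : RootedTree T) (m : T → ℝ) (q : ℕ) : Prop :=
  ∀ x : T, ∃ n : ℕ, 0 < n ∧ (q : ℝ) * m x = (n : ℝ) * m (t.pred x)

/-- The `L^p(m)` norm of a function on a flow tree, `p ∈ [1,∞]`. -/
noncomputable def lpNorm (m : T → ℝ) (p : ℝ≥0∞) (f : T → ℂ) : ℝ≥0∞ :=
  if p = ∞ then ⨆ x : T, (‖f x‖₊ : ℝ≥0∞)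
  else (∑' x : T, (‖f x‖₊ : ℝ≥0∞) ^ p.toReal * ENNReal.ofReal (m x)) ^ (1 / p.toReal)

/-- The measure of a subset of a flow tree. -/
noncomputable def setMass (m : T → ℝ) (S : Set T) : ℝ≥0∞ :=
  ∑' x : S, ENNReal.ofReal (m (x : T))

/-- Boundedness of an operator on `L^p(m)`. -/
def BoundedOnLp (m : T → ℝ) (p : ℝ≥0∞) (O : (T → ℂ) → (T → ℂ)) : Prop :=
  ∃ C : ℝ, 0 < C ∧ ∀ f : T → ℂ, lpNorm m p f < ∞ →
    lpNorm m p (O f) ≤ ENNReal.ofReal C * lpNorm m p f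

/-- Boundedness on `L^p(m)` of an operator defined on `L²(m) ∩ L^p(m)`. -/
def BoundedOnLp₂ (m : T → ℝ) (p : ℝ≥0∞) (O : (T → ℂ) → (T → ℂ)) : Prop :=
  ∃ C : ℝ, 0 < C ∧ ∀ f : T → ℂ, lpNorm m 2 f < ∞ → lpNorm m p f < ∞ →
    lpNorm m p (O f) ≤ ENNReal.ofReal C * lpNorm m p f

/-- The `L^p → L^p` operator norm (supremum over the unit ball). -/
noncomputable def opNormLp (m : T → ℝ) (p : ℝ≥0∞) (O : (T → ℂ) → (T → ℂ)) : ℝ≥0∞ :=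
  ⨆ f : {f : T → ℂ // lpNorm m p f ≤ 1}, lpNorm m p (O f.1)

/-- The `L^p → L^p` operator norm of an operator defined on `L²(m) ∩ L^p(m)`. -/
noncomputable def opNormLp₂ (m : T → ℝ) (p : ℝ≥0∞) (O : (T → ℂ) → (T → ℂ)) : ℝ≥0∞ :=
  ⨆ f : {f : T → ℂ // lpNorm m 2 f < ∞ ∧ lpNorm m p f ≤ 1}, lpNorm m p (O f.1)

/-- The flow measure `m` is locally doubling. -/
def LocallyDoubling (t : RootedTree T) (m : T → ℝ) : Prop :=
  ∀ R : ℝ, 0 < R → ∃ D : ℝ, 0 < D ∧ ∀ (x : T) (r : ℝ), 0 < r → r ≤ R →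
    setMass m {y : T | (t.dist x y : ℝ) ≤ 2 * r} ≤
      ENNReal.ofReal D * setMass m {y : T | (t.dist x y : ℝ) ≤ r}

/-- The shift operator `Σ f (x) = f(𝔭(x))`. -/
noncomputable def shiftOp (t : RootedTree T) (f : T → ℂ) : T → ℂ :=
  fun x => f (t.pred x)

/-- The adjoint shift `Σ* f (x) = m(x)⁻¹ Σ_{y ∈ succ(x)} f(y) m(y)`. -/
noncomputable def shiftStarOp (t : RootedTree T) (m : T → ℝ) (f : T → ℂ) : T → ℂ :=
  fun x => ((m x : ℂ))⁻¹ * ∑' y : {y : T // t.pred y = x}, f (y : T) * ((m (y : T) : ℂ))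

/-- The flow gradient `∇ = I - Σ`. -/
noncomputable def gradOp (t : RootedTree T) (f : T → ℂ) : T → ℂ :=
  fun x => f x - f (t.pred x)

/-- The adjoint flow gradient `∇* = I - Σ*`. -/
noncomputable def gradStarOp (t : RootedTree T) (m : T → ℝ) (f : T → ℂ) : T → ℂ :=
  fun x => f x - shiftStarOp t m f x

/-- The flow Laplacian `𝓛 = I - (Σ + Σ*)/2`. -/
noncomputable def lapOp (t : RootedTree T) (m : T → ℝ) (f : T → ℂ) : T → ℂ :=
  fun x => f x - (shiftOp t f x + shiftStarOp t m f x) / 2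

/-- The heat semigroup `e^{-s𝓛}`, given by the exponential power series. -/
noncomputable def heatOp (t : RootedTree T) (m : T → ℝ) (s : ℝ) (f : T → ℂ) : T → ℂ :=
  fun x => ∑' k : ℕ, ((-(s : ℂ)) ^ k / (Nat.factorial k : ℂ)) * ((lapOp t m)^[k] f) x

/-- The integral kernel of an operator: `K_O(x,y) = O(𝟙_{y})(x) / m(y)`. -/
noncomputable def opKernel (m : T → ℝ) (O : (T → ℂ) → (T → ℂ)) (x y : T) : ℂ :=
  O (Set.indicator {y} fun _ => (1 : ℂ)) x / (m y : ℂ)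

/-- The (formal) adjoint of an operator, given by the conjugate-transpose kernel. -/
noncomputable def adjointOp (m : T → ℝ) (O : (T → ℂ) → (T → ℂ)) (f : T → ℂ) : T → ℂ :=
  fun x => ∑' y : T, (starRingEnd ℂ) (opKernel m O y x) * f y * ((m y : ℂ))

/-- A polynomial applied to an operator. -/
noncomputable def polyApply (L : (T → ℂ) → (T → ℂ)) (P : Polynomial ℂ) (f : T → ℂ) : T → ℂ :=
  fun x => ∑ i ∈ Finset.range (P.natDegree + 1), P.coeff i * (L^[i] f) x

/-- `B` is the continuous functional calculus `F(L)` of the self-adjoint operator `L`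
(whose spectrum is contained in `[0,2]`): `B` is approximated on `L²(m)` by polynomials
in `L`, with operator-norm error controlled by the sup-norm error on `[0,2]`. -/
def IsCfcOf (m : T → ℝ) (L : (T → ℂ) → (T → ℂ)) (F : ℝ → ℂ)
    (B : (T → ℂ) → (T → ℂ)) : Prop :=
  ∀ ε : ℝ, 0 < ε → ∃ P : Polynomial ℂ,
    (∀ lam : ℝ, lam ∈ Set.Icc (0 : ℝ) 2 → ‖F lam - P.eval (lam : ℂ)‖ ≤ ε) ∧
    ∀ f : T → ℂ, lpNorm m 2 f < ∞ →
      lpNorm m 2 (fun x => B f x - polyApply L P f x) ≤ ENNReal.ofReal ε * lpNorm m 2 f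

/-- `Φ` is the Borel functional calculus of the self-adjoint operator `L` with spectrum
in `[0,2]`: it agrees with the continuous functional calculus on continuous functions and
satisfies dominated convergence (bounded pointwise convergence on `[0,2]` implies strong
convergence on `L²(m)`). These properties determine `Φ F` uniquely on `L²(m)` for every
bounded Borel `F`. -/
structure IsBorelFC (m : T → ℝ) (L : (T → ℂ) → (T → ℂ))
    (Φ : (ℝ → ℂ) → (T → ℂ) → (T → ℂ)) : Prop where
  cfc_agree : ∀ F : ℝ → ℂ, ContinuousOn F (Set.Icc 0 2) → IsCfcOf m L F (Φ F)
  dominated : ∀ (Fs : ℕ → ℝ → ℂ) (F : ℝ → ℂ) (C : ℝ),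
    (∀ n, Measurable (Fs n)) → Measurable F →
    (∀ n, ∀ lam ∈ Set.Icc (0 : ℝ) 2, ‖Fs n lam‖ ≤ C) →
    (∀ lam ∈ Set.Icc (0 : ℝ) 2, Tendsto (fun n => Fs n lam) atTop (nhds (F lam))) →
    ∀ f : T → ℂ, lpNorm m 2 f < ∞ →
      Tendsto (fun n => lpNorm m 2 (fun x => Φ (Fs n) f x - Φ F f x)) atTop (nhds 0)

/-- The truncated Riesz transform `∇ F_N(𝓛)`, where
`F_N(s) = π^{-1/2} ∫₀^N e^{-ts} t^{-1/2} dt`. -/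
noncomputable def rieszApprox (t : RootedTree T) (m : T → ℝ) (N : ℕ) (f : T → ℂ) : T → ℂ :=
  fun x => (Real.sqrt Real.pi)⁻¹ •
    ∫ u in Set.Ioc (0 : ℝ) (N : ℝ), (Real.sqrt u)⁻¹ • gradOp t (heatOp t m u f) x

/-- `g = R f`, where the Riesz transform `R = ∇ 𝓛^{-1/2}` is the limit of the truncated
Riesz transforms `∇ F_N(𝓛)` in the strong operator topology of `L²(m)`. -/
def IsRieszOf (t : RootedTree T) (m : T → ℝ) (f g : T → ℂ) : Prop :=
  Tendsto (fun N : ℕ => lpNorm m 2 (fun x => rieszApprox t m N f x - g x)) atTop (nhds 0)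

/-- The integral kernel of the Riesz transform:
`K_R(x,y) = π^{-1/2} ∫₀^∞ K_{∇ e^{-u𝓛}}(x,y) u^{-1/2} du`. -/
noncomputable def rieszKernel (t : RootedTree T) (m : T → ℝ) (x y : T) : ℂ :=
  (Real.sqrt Real.pi)⁻¹ •
    ∫ u in Set.Ioi (0 : ℝ),
      (Real.sqrt u)⁻¹ • opKernel m (fun f => gradOp t (heatOp t m u f)) x y

/-- The convolution kernel `k̃_ℤ(n) = (2√2/π) n/(n² - 1/4)` of the skew-symmetric part of
the discrete Hilbert transform. -/
noncomputable def ktZ (n : ℤ) : ℂ :=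
  ((2 * Real.sqrt 2 / Real.pi : ℝ) : ℂ) * (n : ℂ) / ((n : ℂ) ^ 2 - 1 / 4)

/-- `lam` belongs to the resolvent set of the flow Laplacian on `L^p(m)`:
`lam - 𝓛` has a bounded two-sided inverse on `L^p(m)`. -/
def InResolvent (t : RootedTree T) (m : T → ℝ) (p : ℝ≥0∞) (lam : ℂ) : Prop :=
  ∃ B : (T → ℂ) → (T → ℂ), BoundedOnLp m p B ∧
    (∀ f : T → ℂ, lpNorm m p f < ∞ →
      B (fun x => lam * f x - lapOp t m f x) = f) ∧
    (∀ f : T → ℂ, lpNorm m p f < ∞ →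
      (fun x => lam * B f x - lapOp t m (B f) x) = f)

/-- A submersion between trees with root at infinity. -/
structure IsSubmersion (t₁ : RootedTree T₁) (t₂ : RootedTree T₂) (π : T₁ → T₂) : Prop where
  map_pred : ∀ x : T₁, π (t₁.pred x) = t₂.pred (π x)
  map_succ : ∀ x : T₁, π '' {y : T₁ | t₁.pred y = x} = {z : T₂ | t₂.pred z = π x}

/-- `π`-compatibility of the flow measures `m₁`, `m₂`:
`m₂(π x)/m₂(𝔭(π x)) = m₁(π⁻¹{π x} ∩ succ(𝔭 x))/m₁(𝔭 x)`. -/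
def FlowCompatible (t₁ : RootedTree T₁) (t₂ : RootedTree T₂) (π : T₁ → T₂)
    (m₁ : T₁ → ℝ) (m₂ : T₂ → ℝ) : Prop :=
  ∀ x : T₁,
    m₂ (π x) / m₂ (t₂.pred (π x)) =
      (∑' y : {y : T₁ // π y = π x ∧ t₁.pred y = t₁.pred x}, m₁ (y : T₁)) / m₁ (t₁.pred x)

/-- `O'` witnesses `π`-compatibility of `O`: `O Φ_π = Φ_π O'` and `O* Φ_π = Φ_π O'*`
on `L^∞(m₂)`, where `Φ_π f = f ∘ π` is the lifting operator. -/
def CompatiblePair (t₁ : RootedTree T₁) (t₂ : RootedTree T₂) (π : T₁ → T₂)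
    (m₁ : T₁ → ℝ) (m₂ : T₂ → ℝ)
    (O : (T₁ → ℂ) → (T₁ → ℂ)) (O' : (T₂ → ℂ) → (T₂ → ℂ)) : Prop :=
  (∀ f : T₂ → ℂ, lpNorm m₂ ∞ f < ∞ → O (f ∘ π) = (O' f) ∘ π) ∧
  (∀ f : T₂ → ℂ, lpNorm m₂ ∞ f < ∞ →
    adjointOp m₁ O (f ∘ π) = (adjointOp m₂ O' f) ∘ π)

/-- The squared Sobolev norm `∫ (1+ξ²)^s |G(ξ)|² dξ`, applied to the Fourier transform `G`
of the function under consideration. -/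
noncomputable def sobolevWeight (s : ℝ) (G : ℝ → ℂ) : ℝ≥0∞ :=
  ∫⁻ ξ : ℝ, ENNReal.ofReal ((1 + ξ ^ 2) ^ s) * (‖G ξ‖₊ : ℝ≥0∞) ^ 2

/-- The Sobolev norm `(∫ (1+ξ²)^s |G(ξ)|² dξ)^{1/2}`. -/
noncomputable def sobolevNorm (s : ℝ) (G : ℝ → ℂ) : ℝ≥0∞ :=
  sobolevWeight s G ^ (1 / 2 : ℝ)

/-- `G` is the (distributional) Fourier transform of `F`, characterised by duality
against Schwartz functions. -/
def FourierCoupled (F G : ℝ → ℂ) : Prop :=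
  ∀ φ : SchwartzMap ℝ ℂ,
    (∫ x : ℝ, F x * FourierTransform.fourier (fun y : ℝ => (φ y : ℂ)) x) = ∫ ξ : ℝ, G ξ * φ ξ

/-- The coefficients `g_F(n) = -(i/π) ∫_{-π}^{π} sin θ · F(1-cos θ) e^{inθ} dθ`,
i.e. `∇̃_ℤ k_{F(Δ_ℤ)}(n)` when `F` is bounded Borel on `[0,2]`. -/
noncomputable def gCoef (F : ℝ → ℂ) (n : ℤ) : ℂ :=
  (-(Complex.I / (Real.pi : ℂ))) *
    ∫ θ in Set.Ioc (-Real.pi) Real.pi,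
      ((Real.sin θ : ℂ)) * F (1 - Real.cos θ) * Complex.exp ((n : ℂ) * (θ : ℂ) * Complex.I)

lemma predZ_iter (k : ℕ) (n : ℤ) : (fun n : ℤ => n + 1)^[k] n = n + k := by
  induction k generalizing n with
  | zero => simp
  | succ k ih =>
      rw [Function.iterate_succ_apply, ih]
      push_cast
      ring

/-- `ℤ` as a tree with root at infinity (`𝔭(n) = n+1`); together with the flow measure
`mZ ≡ 1` this is the homogeneous flow tree `T₁`, whose flow Laplacian is the discrete
Laplacian `Δ_ℤ`. -/
noncomputable def treeZ : RootedTree ℤ where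
  pred n := n + 1
  no_cycle x k hk := by rw [predZ_iter]; omega
  connected x y := ⟨(y - x).toNat, (x - y).toNat, by rw [predZ_iter, predZ_iter]; omega⟩
  succ_finite x := (Set.finite_singleton (x - 1)).subset (by
    intro y hy
    simp only [Set.mem_setOf_eq] at hy
    simp only [Set.mem_singleton_iff]
    omega)

/-- The counting flow measure on `ℤ`. -/
def mZ : ℤ → ℝ := fun _ => 1

/-- The convolution kernel of a translation-invariant operator on `ℤ`: `k_B = B δ₀`. -/
noncomputable def kZker (B : (ℤ → ℂ) → (ℤ → ℂ)) (n : ℤ) : ℂ :=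
  B (Set.indicator {0} fun _ => (1 : ℂ)) n

end Flow

namespace RatAux

variable {T : Type*}

lemma iter_inj (t : Flow.RootedTree T) (o : T) {a b : ℕ}
    (h : t.pred^[a] o = t.pred^[b] o) : a = b := by
  rcases le_total a b with hab | hab
  · by_contra hne
    have h1 : 1 ≤ b - a := by omega
    have h2 : t.pred^[b - a] (t.pred^[a] o) = t.pred^[a] o := by
      rw [← Function.iterate_add_apply, Nat.sub_add_cancel hab, ← h]
    exact t.no_cycle _ _ h1 h2
  · by_contra hne
    have h1 : 1 ≤ a - b := by omega
    have h2 : t.pred^[a - b] (t.pred^[b] o) = t.pred^[b] o := by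
      rw [← Function.iterate_add_apply, Nat.sub_add_cancel hab, h]
    exact t.no_cycle _ _ h1 h2

lemma tsum_succ (t : Flow.RootedTree T) (x : T) (f : T → ℝ) :
    ∑' y : {y : T // t.pred y = x}, f (y : T) = ∑ y ∈ (t.succ_finite x).toFinset, f y := by
  rw [← (t.succ_finite x).toFinset.tsum_subtype f]
  rw [← Equiv.tsum_eq (Equiv.subtypeEquivRight
    (p := fun y => t.pred y = x) (q := fun y => y ∈ (t.succ_finite x).toFinset)
    (fun y => by simp [Set.Finite.mem_toFinset]))
    (fun y : (t.succ_finite x).toFinset => f (y : T))]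
  simp [Equiv.subtypeEquivRight]
  rfl

end RatAux

/-- On a tree with root at infinity of bounded degree, every flow
measure is the pointwise limit of a sequence of uniformly rational flow measures. -/
theorem uniformly_rational_approximation {T : Type*} [Nonempty T]
    (t : Flow.RootedTree T)
    (hdeg : ∃ Q : ℕ, ∀ x : T, {y : T | t.pred y = x}.ncard ≤ Q)
    (m : T → ℝ) (hm : Flow.IsFlowMeasure t m) :
    ∃ ms : ℕ → T → ℝ,
      (∀ j : ℕ, Flow.IsFlowMeasure t (ms j) ∧
        ∃ q : ℕ, 0 < q ∧ Flow.UniformlyRational t (ms j) q) ∧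
      ∀ x : T, Filter.Tendsto (fun j => ms j x) Filter.atTop (nhds (m x)) := by
  classical
  obtain ⟨Q₀, hQ₀⟩ := hdeg
  set Q : ℕ := Q₀ + 1 with hQdef
  have hQ1 : (1 : ℝ) ≤ (Q : ℝ) := by exact_mod_cast Nat.one_le_iff_ne_zero.mpr (by omega)
  have hQR : (0 : ℝ) < (Q : ℝ) := by linarith
  set S : T → Finset T := fun x => (t.succ_finite x).toFinset with hS
  have hmemS : ∀ x y, y ∈ S x ↔ t.pred y = x := fun x y => by
    simp [hS, Set.Finite.mem_toFinset]
  have hmemS' : ∀ y : T, y ∈ S (t.pred y) := fun y => (hmemS _ y).mpr rfl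
  have hcardS : ∀ x, (S x).card ≤ Q := by
    intro x
    have h := hQ₀ x
    rw [Set.ncard_eq_toFinset_card _ (t.succ_finite x)] at h
    simp only [hS]
    omega
  have htsum : ∀ (x : T) (f : T → ℝ),
      ∑' y : {y : T // t.pred y = x}, f (y : T) = ∑ y ∈ S x, f y :=
    fun x f => RatAux.tsum_succ t x f
  set ρ : T → ℝ := fun y => m y / m (t.pred y) with hρ
  have hρpos : ∀ y, 0 < ρ y := fun y => div_pos (hm.pos y) (hm.pos _)
  have hsum_m : ∀ x, ∑ y ∈ S x, m y = m x := by
    intro x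
    rw [hm.flow x]
    exact (htsum x m).symm
  have hsum_ρ : ∀ x, ∑ y ∈ S x, ρ y = 1 := by
    intro x
    have h1 : ∑ y ∈ S x, ρ y = (∑ y ∈ S x, m y) / m x := by
      rw [Finset.sum_div]
      refine Finset.sum_congr rfl fun y hy => ?_
      simp only [hρ]
      rw [(hmemS x y).mp hy]
    rw [h1, hsum_m, div_self (hm.pos x).ne']
  have hSne : ∀ x, (S x).Nonempty := by
    intro x
    rcases (S x).eq_empty_or_nonempty with h | h
    · have h2 := hsum_ρ x
      rw [h, Finset.sum_empty] at h2
      norm_num at h2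
    · exact h
  have hy0 : ∀ x, ∃ y ∈ S x, (1 : ℝ) / Q ≤ ρ y := by
    intro x
    by_contra hcon
    push_neg at hcon
    have h2 : ∑ y ∈ S x, ρ y < ∑ _y ∈ S x, (1 : ℝ) / Q :=
      Finset.sum_lt_sum_of_nonempty (hSne x) (fun y hy => hcon y hy)
    have h3 : ∑ _y ∈ S x, (1 : ℝ) / Q = ((S x).card : ℝ) * (1 / (Q : ℝ)) := by
      rw [Finset.sum_const, nsmul_eq_mul]
    have h4 : ((S x).card : ℝ) * (1 / (Q : ℝ)) ≤ 1 := by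
      rw [mul_one_div, div_le_one hQR]
      exact_mod_cast hcardS x
    have h5 := hsum_ρ x
    linarith
  choose y0 hy0mem hy0ρ using hy0
  set q : ℕ → ℕ := fun j => (Q * Q + 1) * (j + 1) with hq
  have hqpos : ∀ j, 0 < q j := fun j => Nat.mul_pos (by omega) (by omega)
  have hqR : ∀ j, (0 : ℝ) < (q j : ℝ) := fun j => by exact_mod_cast hqpos j
  have hqQQ : ∀ j, (Q : ℝ) * Q ≤ (q j : ℝ) := by
    intro j
    have h : Q * Q ≤ q j := by
      calc Q * Q ≤ (Q * Q + 1) * 1 := by omega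
      _ ≤ (Q * Q + 1) * (j + 1) := Nat.mul_le_mul_left _ (by omega)
    exact_mod_cast h
  have hceil_lb : ∀ j z, (q j : ℝ) * ρ z ≤ (⌈(q j : ℝ) * ρ z⌉₊ : ℝ) := fun j z => Nat.le_ceil _
  have hceil_ub : ∀ j z, (⌈(q j : ℝ) * ρ z⌉₊ : ℝ) < (q j : ℝ) * ρ z + 1 := fun j z =>
    Nat.ceil_lt_add_one (le_of_lt (mul_pos (hqR j) (hρpos z)))
  have hB : ∀ j x, ((∑ z ∈ (S x).erase (y0 x), ⌈(q j : ℝ) * ρ z⌉₊ : ℕ) : ℝ) + 1 ≤ (q j : ℝ) := by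
    intro j x
    have hcard : (((S x).erase (y0 x)).card : ℝ) ≤ (Q : ℝ) - 1 := by
      have h1 := Finset.card_erase_of_mem (hy0mem x)
      have h2 := hcardS x
      have h3 : ((S x).erase (y0 x)).card ≤ Q - 1 := by omega
      have h4 : (1 : ℕ) ≤ Q := by omega
      have := Nat.cast_le (α := ℝ) |>.mpr h3
      rwa [Nat.cast_sub h4, Nat.cast_one] at this
    have hρerase : ∑ z ∈ (S x).erase (y0 x), ρ z = 1 - ρ (y0 x) := by
      have h1 := Finset.sum_erase_add (S x) ρ (hy0mem x)
      have h2 := hsum_ρ x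
      linarith
    have h1 : ((∑ z ∈ (S x).erase (y0 x), ⌈(q j : ℝ) * ρ z⌉₊ : ℕ) : ℝ)
        ≤ ∑ z ∈ (S x).erase (y0 x), ((q j : ℝ) * ρ z + 1) := by
      rw [Nat.cast_sum]
      exact Finset.sum_le_sum fun z _ => (hceil_ub j z).le
    have h2 : ∑ z ∈ (S x).erase (y0 x), ((q j : ℝ) * ρ z + 1)
        = (q j : ℝ) * (∑ z ∈ (S x).erase (y0 x), ρ z) + (((S x).erase (y0 x)).card : ℝ) := by
      rw [Finset.sum_add_distrib, Finset.mul_sum, Finset.sum_const, nsmul_eq_mul, mul_one]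
    have h6 : (Q : ℝ) ≤ (q j : ℝ) * (1 / Q) := by
      rw [mul_one_div, le_div_iff₀ hQR]
      exact hqQQ j
    have h7 : (q j : ℝ) * (1 / Q) ≤ (q j : ℝ) * ρ (y0 x) :=
      mul_le_mul_of_nonneg_left (hy0ρ x) (hqR j).le
    rw [hρerase] at h2
    nlinarith
  have hBnat : ∀ j x, (∑ z ∈ (S x).erase (y0 x), ⌈(q j : ℝ) * ρ z⌉₊) + 1 ≤ q j := by
    intro j x
    exact_mod_cast hB j x
  set w : ℕ → T → ℕ := fun j y =>
    if y = y0 (t.pred y) then q j - ∑ z ∈ (S (t.pred y)).erase y, ⌈(q j : ℝ) * ρ z⌉₊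
    else ⌈(q j : ℝ) * ρ y⌉₊ with hw
  have hw_y0 : ∀ j x, w j (y0 x) = q j - ∑ z ∈ (S x).erase (y0 x), ⌈(q j : ℝ) * ρ z⌉₊ := by
    intro j x
    have hpred : t.pred (y0 x) = x := (hmemS x _).mp (hy0mem x)
    simp only [hw]
    rw [hpred, if_pos rfl]
  have hw_ne : ∀ j y, y ≠ y0 (t.pred y) → w j y = ⌈(q j : ℝ) * ρ y⌉₊ := by
    intro j y h
    simp only [hw]
    rw [if_neg h]
  have hw_pos : ∀ j y, 1 ≤ w j y := by
    intro j y
    by_cases hc : y = y0 (t.pred y)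
    · rw [hc, hw_y0 j (t.pred y)]
      have := hBnat j (t.pred y)
      omega
    · rw [hw_ne j y hc]
      exact Nat.ceil_pos.mpr (mul_pos (hqR j) (hρpos y))
  have hw_sum : ∀ j x, ∑ y ∈ S x, w j y = q j := by
    intro j x
    rw [← Finset.sum_erase_add (S x) _ (hy0mem x)]
    have h1 : ∑ y ∈ (S x).erase (y0 x), w j y
        = ∑ z ∈ (S x).erase (y0 x), ⌈(q j : ℝ) * ρ z⌉₊ := by
      refine Finset.sum_congr rfl fun z hz => ?_
      have hzne : z ≠ y0 x := Finset.ne_of_mem_erase hz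
      have hzpred : t.pred z = x := (hmemS x z).mp (Finset.mem_of_mem_erase hz)
      exact hw_ne j z (by rw [hzpred]; exact hzne)
    rw [h1, hw_y0 j x]
    have := hBnat j x
    omega
  set ρj : ℕ → T → ℝ := fun j y => (w j y : ℝ) / (q j : ℝ) with hρj
  have hρjpos : ∀ j y, 0 < ρj j y := fun j y =>
    div_pos (by exact_mod_cast hw_pos j y) (hqR j)
  have hρjsum : ∀ j x, ∑ y ∈ S x, ρj j y = 1 := by
    intro j x
    have h1 : (∑ y ∈ S x, (w j y : ℝ)) = (q j : ℝ) := by exact_mod_cast hw_sum j x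
    simp only [hρj]
    rw [← Finset.sum_div, h1, div_self (hqR j).ne']
  have hsingle : ∀ j z, |ρ z - (⌈(q j : ℝ) * ρ z⌉₊ : ℝ) / q j| ≤ 1 / q j := by
    intro j z
    have l1 : ρ z ≤ (⌈(q j : ℝ) * ρ z⌉₊ : ℝ) / q j := by
      rw [le_div_iff₀ (hqR j)]
      have := hceil_lb j z
      nlinarith
    have l2 : (⌈(q j : ℝ) * ρ z⌉₊ : ℝ) / q j ≤ ρ z + 1 / q j := by
      rw [div_le_iff₀ (hqR j)]
      have h1 := hceil_ub j z
      have h2 : (ρ z + 1 / q j) * q j = ρ z * q j + 1 := by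
        field_simp
        rw [mul_add, mul_one_div_cancel (hqR j).ne', mul_comm]
      nlinarith
    rw [abs_le]
    constructor <;> linarith
  have herr : ∀ j y, |ρj j y - ρ y| ≤ (Q : ℝ) / q j := by
    intro j y
    by_cases hc : y = y0 (t.pred y)
    · set x := t.pred y with hx
      have hBle : (∑ z ∈ (S x).erase (y0 x), ⌈(q j : ℝ) * ρ z⌉₊) ≤ q j := by
        have := hBnat j x; omega
      have hρerase : ∑ z ∈ (S x).erase (y0 x), ρ z = 1 - ρ (y0 x) := by
        have h1 := Finset.sum_erase_add (S x) ρ (hy0mem x)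
        have h2 := hsum_ρ x
        linarith
      have e2 : ρj j y - ρ y
          = ∑ z ∈ (S x).erase (y0 x), (ρ z - (⌈(q j : ℝ) * ρ z⌉₊ : ℝ) / q j) := by
        simp only [hρj]
        rw [hc, hw_y0 j x, Finset.sum_sub_distrib, hρerase, ← Finset.sum_div,
          Nat.cast_sub hBle, ← hc]
        push_cast
        field_simp
        ring
        rw [mul_inv_cancel₀ (hqR j).ne']
      rw [e2]
      calc |∑ z ∈ (S x).erase (y0 x), (ρ z - (⌈(q j : ℝ) * ρ z⌉₊ : ℝ) / q j)|
          ≤ ∑ z ∈ (S x).erase (y0 x), |ρ z - (⌈(q j : ℝ) * ρ z⌉₊ : ℝ) / q j| :=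
            Finset.abs_sum_le_sum_abs _ _
        _ ≤ ∑ _z ∈ (S x).erase (y0 x), (1 / (q j : ℝ)) :=
            Finset.sum_le_sum fun z _ => hsingle j z
        _ = (((S x).erase (y0 x)).card : ℝ) * (1 / (q j : ℝ)) := by
            rw [Finset.sum_const, nsmul_eq_mul]
        _ ≤ (Q : ℝ) * (1 / (q j : ℝ)) := by
            have h1 := Finset.card_erase_of_mem (hy0mem x)
            have h2 := hcardS x
            have h3 : (((S x).erase (y0 x)).card : ℝ) ≤ (Q : ℝ) := by
              exact_mod_cast (by omega : ((S x).erase (y0 x)).card ≤ Q)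
            have h4 : (0:ℝ) ≤ 1 / (q j : ℝ) := by positivity
            exact mul_le_mul_of_nonneg_right h3 h4
        _ = (Q : ℝ) / q j := by rw [mul_one_div]
    · have h1 : ρj j y = (⌈(q j : ℝ) * ρ y⌉₊ : ℝ) / q j := by
        simp only [hρj]
        rw [hw_ne j y hc]
      rw [h1, abs_sub_comm]
      calc |ρ y - (⌈(q j : ℝ) * ρ y⌉₊ : ℝ) / q j| ≤ 1 / q j := hsingle j y
        _ ≤ (Q : ℝ) / q j := by gcongr
  have hqtend : Tendsto (fun j => (q j : ℝ)) atTop atTop := by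
    apply tendsto_natCast_atTop_atTop.comp
    apply tendsto_atTop_mono ?_ tendsto_id
    intro j
    simp only [id]
    calc j ≤ j + 1 := Nat.le_succ j
      _ = 1 * (j + 1) := (one_mul _).symm
      _ ≤ (Q * Q + 1) * (j + 1) := Nat.mul_le_mul_right _ (by omega)
  have hρj_tendsto : ∀ y, Tendsto (fun j => ρj j y) atTop (nhds (ρ y)) := by
    intro y
    have h0 : Tendsto (fun j => (Q : ℝ) / q j) atTop (nhds 0) :=
      Tendsto.div_atTop tendsto_const_nhds hqtend
    have hdiff : Tendsto (fun j => ρj j y - ρ y) atTop (nhds 0) :=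
      squeeze_zero_norm (fun j => by simpa using herr j y) h0
    have h2 := hdiff.add (tendsto_const_nhds (x := ρ y))
    simpa using h2
  set o : T := Classical.arbitrary T with ho
  choose k l hkl using fun x => t.connected x o
  set ms : ℕ → T → ℝ := fun j x =>
    m o * (∏ i ∈ Finset.range (k x), ρj j (t.pred^[i] x)) /
      ∏ i ∈ Finset.range (l x), ρj j (t.pred^[i] o) with hms
  have hprod_pos : ∀ j (z : T) (n : ℕ), 0 < ∏ i ∈ Finset.range n, ρj j (t.pred^[i] z) :=
    fun j z n => Finset.prod_pos fun i _ => hρjpos j _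
  have hms_pos : ∀ j x, 0 < ms j x := fun j x =>
    div_pos (mul_pos (hm.pos o) (hprod_pos j x _)) (hprod_pos j o _)
  have hshift : ∀ j (x : T) (k' l' d : ℕ), t.pred^[k'] x = t.pred^[l'] o →
      m o * (∏ i ∈ Finset.range (k' + d), ρj j (t.pred^[i] x)) /
        ∏ i ∈ Finset.range (l' + d), ρj j (t.pred^[i] o)
      = m o * (∏ i ∈ Finset.range k', ρj j (t.pred^[i] x)) /
        ∏ i ∈ Finset.range l', ρj j (t.pred^[i] o) := by
    intro j x k' l' d h
    induction d with
    | zero => rfl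
    | succ d ih =>
        have hiter : t.pred^[k' + d] x = t.pred^[l' + d] o := by
          rw [show k' + d = d + k' from by omega, show l' + d = d + l' from by omega,
            Function.iterate_add_apply, Function.iterate_add_apply, h]
        rw [show k' + (d + 1) = (k' + d) + 1 from rfl, show l' + (d + 1) = (l' + d) + 1 from rfl,
          Finset.prod_range_succ, Finset.prod_range_succ, hiter, ← mul_assoc,
          mul_div_mul_right _ _ (hρjpos j _).ne']
        exact ih
  have hWD : ∀ j (x : T) (k' l' : ℕ), t.pred^[k'] x = t.pred^[l'] o →
      ms j x = m o * (∏ i ∈ Finset.range k', ρj j (t.pred^[i] x)) /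
        ∏ i ∈ Finset.range l', ρj j (t.pred^[i] o) := by
    intro j x k' l' h
    rcases le_total (k x) k' with hle | hle
    · obtain ⟨d, hd⟩ : ∃ d, k' = k x + d := ⟨k' - k x, by omega⟩
      have h2 : t.pred^[k x + d] x = t.pred^[l x + d] o := by
        rw [show k x + d = d + k x from by omega, show l x + d = d + l x from by omega,
          Function.iterate_add_apply, Function.iterate_add_apply, hkl x]
      have h3 : l' = l x + d := by
        apply RatAux.iter_inj t o
        rw [← h, hd, h2]
      rw [hd, h3]
      exact (hshift j x (k x) (l x) d (hkl x)).symm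
    · obtain ⟨d, hd⟩ : ∃ d, k x = k' + d := ⟨k x - k', by omega⟩
      have h2 : t.pred^[k' + d] x = t.pred^[l' + d] o := by
        rw [show k' + d = d + k' from by omega, show l' + d = d + l' from by omega,
          Function.iterate_add_apply, Function.iterate_add_apply, h]
      have h3 : l x = l' + d := by
        apply RatAux.iter_inj t o
        rw [← hkl x, hd, h2]
      have h4 := hshift j x k' l' d h
      simp only [hms]
      rw [hd, h3]
      exact h4
  have hkey : ∀ j x, ms j x = ρj j x * ms j (t.pred x) := by
    intro j x
    have h1 : t.pred^[k (t.pred x) + 1] x = t.pred^[l (t.pred x)] o := by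
      rw [Function.iterate_succ_apply]
      exact hkl (t.pred x)
    rw [hWD j x _ _ h1, Finset.prod_range_succ']
    simp only [Function.iterate_succ_apply, Function.iterate_zero_apply]
    simp only [hms]
    ring
  have hms_flow : ∀ j, Flow.IsFlowMeasure t (ms j) := by
    intro j
    refine ⟨hms_pos j, fun x => ?_⟩
    rw [htsum x (ms j)]
    have h1 : ∑ y ∈ S x, ms j y = ∑ y ∈ S x, ρj j y * ms j x := by
      refine Finset.sum_congr rfl fun y hy => ?_
      rw [hkey j y, (hmemS x y).mp hy]
    rw [h1, ← Finset.sum_mul, hρjsum j x, one_mul]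
  have htel : ∀ (z : T) (n : ℕ),
      ∏ i ∈ Finset.range n, ρ (t.pred^[i] z) = m z / m (t.pred^[n] z) := by
    intro z n
    induction n with
    | zero => simp [div_self (hm.pos z).ne']
    | succ n ih =>
        rw [Finset.prod_range_succ, ih, Function.iterate_succ_apply']
        simp only [hρ]
        rw [div_mul_div_comm, mul_comm (m (t.pred^[n] z)) (m (t.pred (t.pred^[n] z))),
          mul_div_mul_right _ _ (hm.pos (t.pred^[n] z)).ne']
  refine ⟨ms, fun j => ⟨hms_flow j, q j, hqpos j, fun x => ?_⟩, fun x => ?_⟩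
  · refine ⟨w j x, hw_pos j x, ?_⟩
    rw [hkey j x, ← mul_assoc]
    congr 1
    simp only [hρj]
    field_simp
    rw [mul_div_cancel_left₀ _ (hqR j).ne']
  · have hPx : Tendsto (fun j => ∏ i ∈ Finset.range (k x), ρj j (t.pred^[i] x)) atTop
        (nhds (∏ i ∈ Finset.range (k x), ρ (t.pred^[i] x))) :=
      tendsto_finset_prod _ fun i _ => hρj_tendsto _
    have hPo : Tendsto (fun j => ∏ i ∈ Finset.range (l x), ρj j (t.pred^[i] o)) atTop
        (nhds (∏ i ∈ Finset.range (l x), ρ (t.pred^[i] o))) :=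
      tendsto_finset_prod _ fun i _ => hρj_tendsto _
    have hDpos : 0 < ∏ i ∈ Finset.range (l x), ρ (t.pred^[i] o) :=
      Finset.prod_pos fun i _ => hρpos _
    have hlim : Tendsto (fun j => ms j x) atTop
        (nhds (m o * (∏ i ∈ Finset.range (k x), ρ (t.pred^[i] x)) /
          ∏ i ∈ Finset.range (l x), ρ (t.pred^[i] o))) :=
      (tendsto_const_nhds.mul hPx).div hPo hDpos.ne'
    have hval : m o * (∏ i ∈ Finset.range (k x), ρ (t.pred^[i] x)) /
        (∏ i ∈ Finset.range (l x), ρ (t.pred^[i] o)) = m x := by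
      rw [htel, htel, hkl x]
      have h1 := (hm.pos o).ne'
      have h2 := (hm.pos (t.pred^[l x] o)).ne'
      have h3 := (hm.pos x).ne'
      field_simp
    rw [← hval]
    exact hlim
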